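/- arXiv:2309.00746 — 2 statements merged into one kernel-verified Lean document; each statement's English description precedes it below -/
import Mathlib

section
/- Let X be a nonempty compact Hausdorff topological space. Then C(X) is approximately algebraically closed if and only if for every integer n ≥ 1, every real number K > 0, all a₀, …, a_{n-1} ∈ C(X) with ‖a_j‖ ≤ K for every j < n, and every ε > 0, there exists f ∈ C(X) with ‖f‖ ≤ 2 + K and ‖a₀ + a₁·f + ⋯ + a_{n-1}·f^{n-1} + f^n‖ < ε. -/
lemma poly_lower_bound (n : ℕ) (hn : 1 ≤ n) (K : ℝ) (hK : 0 < K)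
    (b : Fin n → ℂ) (hb : ∀ j, ‖b j‖ ≤ K) (z : ℂ) (hz : 2 + K < ‖z‖) :
    2 / (1 + K) ≤ ‖(∑ j : Fin n, b j * z ^ (j : ℕ)) + z ^ n‖ := by
  set r := ‖z‖ with hr
  have hr2 : 2 < r := by linarith
  have hr1 : (1 : ℝ) < r := by linarith
  have hrpos : 0 < r - 1 := by linarith
  have h1K : (0 : ℝ) < 1 + K := by linarith
  have hR1 : (1 : ℝ) ≤ r ^ n := one_le_pow₀ hr1.le
  have hRr : r ≤ r ^ n := le_self_pow₀ (by linarith) (by omega)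
  -- bound the low-order terms
  have hsum : ‖∑ j : Fin n, b j * z ^ (j : ℕ)‖ ≤ K * ((r ^ n - 1) / (r - 1)) := by
    calc ‖∑ j : Fin n, b j * z ^ (j : ℕ)‖ ≤ ∑ j : Fin n, ‖b j * z ^ (j : ℕ)‖ :=
          norm_sum_le _ _
      _ ≤ ∑ j : Fin n, K * r ^ (j : ℕ) := by
          refine Finset.sum_le_sum fun j _ => ?_
          rw [norm_mul, norm_pow]
          exact mul_le_mul_of_nonneg_right (hb j) (by positivity)
      _ = K * ∑ j : Fin n, r ^ (j : ℕ) := by rw [Finset.mul_sum]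
      _ = K * ((r ^ n - 1) / (r - 1)) := by
          rw [Fin.sum_univ_eq_sum_range (fun j => r ^ j), geom_sum_eq (by linarith)]
  have hnorm : r ^ n - K * ((r ^ n - 1) / (r - 1)) ≤
      ‖(∑ j : Fin n, b j * z ^ (j : ℕ)) + z ^ n‖ := by
    have h2 := norm_sub_le ((∑ j : Fin n, b j * z ^ (j : ℕ)) + z ^ n)
      (∑ j : Fin n, b j * z ^ (j : ℕ))
    rw [add_sub_cancel_left, norm_pow] at h2
    linarith
  have key : 2 / (1 + K) ≤ r ^ n - K * ((r ^ n - 1) / (r - 1)) := by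
    have h2 : K * ((r ^ n - 1) / (r - 1)) ≤ K * (r ^ n / (1 + K)) := by
      refine mul_le_mul_of_nonneg_left ?_ hK.le
      exact div_le_div₀ (by positivity) (by linarith) h1K (by linarith)
    have h3 : r ^ n - K * (r ^ n / (1 + K)) = r ^ n / (1 + K) := by
      field_simp; ring
    have h4 : 2 / (1 + K) ≤ r ^ n / (1 + K) := by gcongr; linarith
    linarith
  linarith

/-- For a nonempty compact Hausdorff space `X`, `C(X)` is approximately algebraically
closed iff for every `n ≥ 1`, `K > 0`, coefficients `a j` with `‖a j‖ ≤ K`, and `ε > 0`,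
there is `f` with `‖f‖ ≤ 2 + K` and `‖∑ a j * f ^ j + f ^ n‖ < ε`. -/
theorem stmt_0 {X : Type*} [TopologicalSpace X] [CompactSpace X] [T2Space X] [Nonempty X] :
    (∀ n : ℕ, 1 ≤ n → ∀ a : Fin n → C(X, ℂ), ∀ ε : ℝ, 0 < ε →
      ∃ f : C(X, ℂ), ‖(∑ j : Fin n, a j * f ^ (j : ℕ)) + f ^ n‖ < ε) ↔
    (∀ n : ℕ, 1 ≤ n → ∀ K : ℝ, 0 < K → ∀ a : Fin n → C(X, ℂ), (∀ j, ‖a j‖ ≤ K) →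
      ∀ ε : ℝ, 0 < ε →
      ∃ f : C(X, ℂ), ‖f‖ ≤ 2 + K ∧ ‖(∑ j : Fin n, a j * f ^ (j : ℕ)) + f ^ n‖ < ε) := by
  constructor
  · intro h n hn K hK a ha ε hε
    have h1K : (0 : ℝ) < 1 + K := by linarith
    set ε' := min ε (1 / (1 + K)) with hε'
    have hε'pos : 0 < ε' := lt_min hε (by positivity)
    obtain ⟨f, hf⟩ := h n hn a ε' hε'pos
    refine ⟨f, ?_, lt_of_lt_of_le hf (min_le_left _ _)⟩
    refine (ContinuousMap.norm_le _ (by linarith)).2 fun x => ?_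
    by_contra hx
    push_neg at hx
    have hb : 2 / (1 + K) ≤ ‖(∑ j : Fin n, (a j) x * (f x) ^ (j : ℕ)) + (f x) ^ n‖ :=
      poly_lower_bound n hn K hK (fun j => (a j) x) (fun j => (ha j).trans'
        ((a j).norm_coe_le_norm x) |>.trans (le_refl K)) (f x) hx
    have heval : ((∑ j : Fin n, a j * f ^ (j : ℕ)) + f ^ n) x
        = (∑ j : Fin n, (a j) x * (f x) ^ (j : ℕ)) + (f x) ^ n := by
      simp
    have hle : ‖((∑ j : Fin n, a j * f ^ (j : ℕ)) + f ^ n) x‖ ≤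
        ‖(∑ j : Fin n, a j * f ^ (j : ℕ)) + f ^ n‖ :=
      ContinuousMap.norm_coe_le_norm _ x
    rw [heval] at hle
    have : ε' ≤ 1 / (1 + K) := min_le_right _ _
    have h12 : (1 : ℝ) / (1 + K) < 2 / (1 + K) := by
      rw [div_lt_div_iff₀ h1K h1K]; nlinarith
    linarith
  · intro h n hn a ε hε
    set K := 1 + ∑ j : Fin n, ‖a j‖ with hK
    have hKpos : 0 < K := by positivity
    have haK : ∀ j, ‖a j‖ ≤ K := by
      intro j
      have := Finset.single_le_sum (f := fun j => ‖a j‖)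
        (fun i _ => norm_nonneg _) (Finset.mem_univ j)
      simp only [hK]; linarith
    obtain ⟨f, _, hf⟩ := h n hn K hKpos a haK ε hε
    exact ⟨f, hf⟩
end

section
/- Let X be a nondegenerate indecomposable continuum. Then X is not locally connected at any of its points; that is, for every x ∈ X there exists an open set U containing x such that no connected open set V satisfies x ∈ V ⊆ U. -/
open Set

/-- Clopen argument: under these hypotheses we get a contradiction. -/
lemma helper0 {X : Type*} [TopologicalSpace X] [ConnectedSpace X]
    {K A' u v : Set X} (hKne : K.Nonempty) (hA' : IsOpen A')
    (hcl : IsClosed (K ∪ A')) (hu : IsOpen u) (hv : IsOpen v)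
    (hcov : K ∪ A' ⊆ u ∪ v) (hKu : K ⊆ u)
    (hempty : (K ∪ A') ∩ (u ∩ v) = ∅)
    (hnev : ((K ∪ A') ∩ v).Nonempty) : False := by
  set Q := (K ∪ A') ∩ v with hQdef
  have hQK : ∀ z ∈ Q, z ∉ K := by
    intro z hz hzK
    have : z ∈ (K ∪ A') ∩ (u ∩ v) := ⟨hz.1, hKu hzK, hz.2⟩
    rw [hempty] at this; exact this
  have hQA' : Q ⊆ A' := by
    intro z hz
    rcases hz.1 with h | h
    · exact absurd h (hQK z hz)
    · exact h
  have hQeq : Q = A' ∩ v := by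
    apply Set.Subset.antisymm
    · exact fun z hz => ⟨hQA' hz, hz.2⟩
    · exact fun z hz => ⟨Or.inr hz.1, hz.2⟩
  have hQopen : IsOpen Q := hQeq ▸ hA'.inter hv
  have hQeq2 : Q = (K ∪ A') ∩ uᶜ := by
    apply Set.Subset.antisymm
    · intro z hz
      refine ⟨hz.1, fun hzu => ?_⟩
      have : z ∈ (K ∪ A') ∩ (u ∩ v) := ⟨hz.1, hzu, hz.2⟩
      rw [hempty] at this; exact this
    · intro z hz
      refine ⟨hz.1, ?_⟩
      rcases hcov hz.1 with h | h
      · exact absurd h hz.2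
      · exact h
  have hQclosed : IsClosed Q := hQeq2 ▸ hcl.inter hu.isClosed_compl
  have : Q = ∅ ∨ Q = univ := isClopen_iff.mp ⟨hQclosed, hQopen⟩
  rcases this with h | h
  · rw [h] at hnev; exact Set.not_nonempty_empty hnev
  · obtain ⟨k, hk⟩ := hKne
    exact hQK k (h ▸ mem_univ k) hk

/-- If `K` is connected, `A'` is open and disjoint from `K`, and `K ∪ A'` is closed,
then `K ∪ A'` is preconnected in a connected space. -/
lemma helper1 {X : Type*} [TopologicalSpace X] [ConnectedSpace X]
    {K A' : Set X} (hK : IsConnected K) (hA' : IsOpen A')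
    (hdisj : ∀ z ∈ K, z ∉ A') (hcl : IsClosed (K ∪ A')) :
    IsPreconnected (K ∪ A') := by
  intro u v hu hv hcov hneu hnev
  by_contra hne
  rw [Set.not_nonempty_iff_eq_empty] at hne
  have hKcov : K ⊆ u ∪ v := fun z hz => hcov (Or.inl hz)
  rcases (K ∩ u).eq_empty_or_nonempty with hKu | hKu
  · -- K ⊆ v
    have hKv : K ⊆ v := by
      intro z hz
      rcases hKcov hz with h | h
      · exact absurd (show z ∈ K ∩ u from ⟨hz, h⟩) (by rw [hKu]; exact id)
      · exact h
    have hempty' : (K ∪ A') ∩ (v ∩ u) = ∅ := by rw [Set.inter_comm v u]; exact hne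
    exact helper0 hK.1 hA' hcl hv hu (by rwa [Set.union_comm v u]) hKv hempty' hneu
  rcases (K ∩ v).eq_empty_or_nonempty with hKv | hKv
  · have hKu' : K ⊆ u := by
      intro z hz
      rcases hKcov hz with h | h
      · exact h
      · exact absurd (show z ∈ K ∩ v from ⟨hz, h⟩) (by rw [hKv]; exact id)
    exact helper0 hK.1 hA' hcl hu hv hcov hKu' hne hnev
  · have := hK.2 u v hu hv hKcov hKu hKv
    obtain ⟨z, hz⟩ := this
    have : z ∈ (K ∪ A') ∩ (u ∩ v) := ⟨Or.inl hz.1, hz.2⟩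
    rw [hne] at this; exact this

/-- A proper subcontinuum with nonempty interior yields a decomposition. -/
lemma key_decomp {X : Type*} [TopologicalSpace X] [ConnectedSpace X]
    {K : Set X} (hKcl : IsClosed K) (hK : IsConnected K) (hKne : K ≠ Set.univ)
    (hint : (interior K).Nonempty) :
    ∃ A B : Set X,
      IsClosed A ∧ IsConnected A ∧ A ≠ Set.univ ∧
      IsClosed B ∧ IsConnected B ∧ B ≠ Set.univ ∧ A ∪ B = Set.univ := by
  have hKcne : Kᶜ.Nonempty := by
    rw [Set.nonempty_compl]; exact hKne
  by_cases h : IsPreconnected (Kᶜ : Set X)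
  · refine ⟨K, closure Kᶜ, hKcl, hK, hKne, isClosed_closure,
      (IsConnected.closure ⟨hKcne, h⟩), ?_, ?_⟩
    · rw [closure_compl]
      intro heq
      obtain ⟨z, hz⟩ := hint
      have : z ∈ (interior K)ᶜ := heq ▸ mem_univ z
      exact this hz
    · apply Set.eq_univ_of_univ_subset
      intro z _
      by_cases hz : z ∈ K
      · exact Or.inl hz
      · exact Or.inr (subset_closure hz)
  · rw [IsPreconnected] at h
    push_neg at h
    obtain ⟨u, v, hu, hv, hcov, hKcu, hKcv, hempty⟩ := h
    set A' := Kᶜ ∩ u with hA'def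
    set B' := Kᶜ ∩ v with hB'def
    have hA'open : IsOpen A' := hKcl.isOpen_compl.inter hu
    have hB'open : IsOpen B' := hKcl.isOpen_compl.inter hv
    have hdisjAB : ∀ z, z ∈ A' → z ∈ B' → False := by
      intro z hzA hzB
      have : z ∈ Kᶜ ∩ (u ∩ v) := ⟨hzA.1, hzA.2, hzB.2⟩
      rw [hempty] at this; exact this
    have hKc_eq : Kᶜ = A' ∪ B' := by
      apply Set.Subset.antisymm
      · intro z hz
        rcases hcov hz with h' | h'
        · exact Or.inl ⟨hz, h'⟩
        · exact Or.inr ⟨hz, h'⟩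
      · intro z hz
        rcases hz with h' | h'
        · exact h'.1
        · exact h'.1
    have hAcompl : (K ∪ A')ᶜ = B' := by
      ext z
      simp only [Set.mem_compl_iff, Set.mem_union, not_or]
      constructor
      · rintro ⟨hzK, hzA⟩
        have : z ∈ A' ∪ B' := hKc_eq ▸ hzK
        rcases this with h' | h'
        · exact absurd h' hzA
        · exact h'
      · intro hzB
        exact ⟨fun hzK => hzB.1 hzK, fun hzA => hdisjAB z hzA hzB⟩
    have hBcompl : (K ∪ B')ᶜ = A' := by
      ext z
      simp only [Set.mem_compl_iff, Set.mem_union, not_or]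
      constructor
      · rintro ⟨hzK, hzB⟩
        have : z ∈ A' ∪ B' := hKc_eq ▸ hzK
        rcases this with h' | h'
        · exact h'
        · exact absurd h' hzB
      · intro hzA
        exact ⟨fun hzK => hzA.1 hzK, fun hzB => hdisjAB z hzA hzB⟩
    have hAclosed : IsClosed (K ∪ A') := by
      rw [← isOpen_compl_iff, hAcompl]; exact hB'open
    have hBclosed : IsClosed (K ∪ B') := by
      rw [← isOpen_compl_iff, hBcompl]; exact hA'open
    have hAconn : IsConnected (K ∪ A') :=
      ⟨hK.1.mono Set.subset_union_left,
       helper1 hK hA'open (fun z hz hz' => hz'.1 hz) hAclosed⟩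
    have hBconn : IsConnected (K ∪ B') :=
      ⟨hK.1.mono Set.subset_union_left,
       helper1 hK hB'open (fun z hz hz' => hz'.1 hz) hBclosed⟩
    refine ⟨K ∪ A', K ∪ B', hAclosed, hAconn, ?_, hBclosed, hBconn, ?_, ?_⟩
    · intro heq
      obtain ⟨z, hz⟩ := hKcv
      have hzB : z ∈ B' := hz
      have : z ∈ (K ∪ A')ᶜ := hAcompl ▸ hzB
      exact this (heq ▸ mem_univ z)
    · intro heq
      obtain ⟨z, hz⟩ := hKcu
      have hzA : z ∈ A' := hz
      have : z ∈ (K ∪ B')ᶜ := hBcompl ▸ hzA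
      exact this (heq ▸ mem_univ z)
    · apply Set.eq_univ_of_univ_subset
      intro z _
      by_cases hz : z ∈ K
      · exact Or.inl (Or.inl hz)
      · have : z ∈ A' ∪ B' := hKc_eq ▸ hz
        rcases this with h' | h'
        · exact Or.inl (Or.inr h')
        · exact Or.inr (Or.inr h')

/-- A nondegenerate indecomposable continuum is not locally connected at any point:
for every `x` there is an open neighbourhood `U` of `x` such that no connected open
set `V` satisfies `x ∈ V ⊆ U`. -/
theorem stmt_3 {X : Type*} [TopologicalSpace X] [CompactSpace X] [T2Space X]
    [ConnectedSpace X] [Nontrivial X]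
    (hind : ¬∃ A B : Set X,
      IsClosed A ∧ IsConnected A ∧ A ≠ Set.univ ∧
      IsClosed B ∧ IsConnected B ∧ B ≠ Set.univ ∧ A ∪ B = Set.univ) :
    ∀ x : X, ∃ U : Set X, IsOpen U ∧ x ∈ U ∧
      ¬∃ V : Set X, IsOpen V ∧ IsConnected V ∧ x ∈ V ∧ V ⊆ U := by
  intro x
  obtain ⟨y, hy⟩ := exists_ne x
  have hyc : ({y}ᶜ : Set X) ∈ nhds x :=
    (isOpen_compl_singleton).mem_nhds (by simp [hy.symm])
  obtain ⟨t, htmem, htcl, hts⟩ := exists_mem_nhds_isClosed_subset hyc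
  refine ⟨interior t, isOpen_interior, mem_interior_iff_mem_nhds.mpr htmem, ?_⟩
  rintro ⟨V, hVopen, hVconn, hxV, hVsub⟩
  apply hind
  have hVt : V ⊆ t := hVsub.trans interior_subset
  have hclVt : closure V ⊆ t := closure_minimal hVt htcl
  have hKne : closure V ≠ Set.univ := by
    intro heq
    have : y ∈ closure V := heq ▸ mem_univ y
    exact hts (hclVt this) rfl
  have hint : (interior (closure V)).Nonempty :=
    ⟨x, interior_maximal subset_closure hVopen hxV⟩
  exact key_decomp isClosed_closure hVconn.closure hKne hint
end
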